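/- arXiv:2511.06034 — 2 statements merged into one kernel-verified Lean document; each statement's English description precedes it below -/
import Mathlib

section
/- Let t ≥ 2 and n ≥ 2t + 4 be integers, let c be an edge-coloring of K_n that contains no rainbow copy of P₄ ∪ tP₂, let H be a rainbow subgraph of K_n isomorphic to (t + 2)P₂ with components P₂¹, …, P₂^{t+2}, and let G be a rainbow subgraph of K_n whose edge set contains E(H). Then for all i ≠ j in {1, …, t + 2}, no edge of G joins a vertex of P₂^i to a vertex of P₂^j; consequently G has exactly t + 2 edges inside V(H). -/
/-- The disjoint union of `k` copies of a graph `G`, on vertex set `Fin k × V`. -/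
def SimpleGraph.multiCopy (k : ℕ) {V : Type*} (G : SimpleGraph V) :
    SimpleGraph (Fin k × V) where
  Adj a b := a.1 = b.1 ∧ G.Adj a.2 b.2
  symm := by
    constructor
    intro a b h
    exact ⟨h.1.symm, h.2.symm⟩
  loopless := by
    constructor
    intro a h
    exact G.loopless.irrefl _ h.2

/-- The disjoint union of two graphs `G` and `H`, on vertex set `V ⊕ W`. -/
def SimpleGraph.disjUnion {V W : Type*} (G : SimpleGraph V) (H : SimpleGraph W) :
    SimpleGraph (V ⊕ W) where
  Adj a b :=
    match a, b with
    | Sum.inl a, Sum.inl b => G.Adj a b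
    | Sum.inr a, Sum.inr b => H.Adj a b
    | _, _ => False
  symm := by
    constructor
    rintro (a | a) (b | b) h <;> simp only at h ⊢
    · exact h.symm
    · exact h.symm
  loopless := by
    constructor
    rintro (a | a) h <;> simp only at h
    · exact G.loopless.irrefl _ h
    · exact H.loopless.irrefl _ h

/-- The linear forest `k P₄ ∪ t P₂`. -/
def kP4tP2 (k t : ℕ) : SimpleGraph ((Fin k × Fin 4) ⊕ (Fin t × Fin 2)) :=
  (SimpleGraph.multiCopy k (SimpleGraph.pathGraph 4)).disjUnion
    (SimpleGraph.multiCopy t (SimpleGraph.pathGraph 2))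

/-- The edge-coloring `c` of `K_n` admits a rainbow copy of `H`: there is an injection
of the vertices of `H` into `Fin n` such that distinct edges of `H` get distinct colors. -/
def HasRainbowCopy {V : Type*} (n : ℕ) (c : Sym2 (Fin n) → ℕ) (H : SimpleGraph V) : Prop :=
  ∃ f : V ↪ Fin n, Set.InjOn (fun e => c (Sym2.map (⇑f) e)) H.edgeSet

/-- The number of colors used by an edge-coloring `c` on the edges of `K_n`. -/
noncomputable def colorCount (n : ℕ) (c : Sym2 (Fin n) → ℕ) : ℕ :=
  (c '' (⊤ : SimpleGraph (Fin n)).edgeSet).ncard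

/-- The anti-Ramsey number `AR(n, H)`: the maximum number of colors in an edge-coloring
of `K_n` containing no rainbow copy of `H`. -/
noncomputable def AR {V : Type*} (n : ℕ) (H : SimpleGraph V) : ℕ :=
  sSup {m : ℕ | ∃ c : Sym2 (Fin n) → ℕ, colorCount n c = m ∧ ¬ HasRainbowCopy n c H}

/-- The set of edges of `G` with both endpoints in `A` (the edges of `G[A]`). -/
def edgesInside {α : Type*} (G : SimpleGraph α) (A : Set α) : Set (Sym2 α) :=
  {e ∈ G.edgeSet | ∀ v ∈ e, v ∈ A}

/-- The set of edges of `G` with one endpoint in `A` and the other in `B`,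
i.e. `[A, B]_G`. -/
def edgesBetween {α : Type*} (G : SimpleGraph α) (A B : Set α) : Set (Sym2 α) :=
  {e ∈ G.edgeSet | ∃ u v, e = s(u, v) ∧ u ∈ A ∧ v ∈ B}

lemma disjUnion_adj_inl_inl {V W : Type*} (G : SimpleGraph V) (H : SimpleGraph W) (a b : V) :
    (G.disjUnion H).Adj (Sum.inl a) (Sum.inl b) ↔ G.Adj a b := Iff.rfl

lemma disjUnion_adj_inr_inr {V W : Type*} (G : SimpleGraph V) (H : SimpleGraph W) (a b : W) :
    (G.disjUnion H).Adj (Sum.inr a) (Sum.inr b) ↔ H.Adj a b := Iff.rfl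

lemma disjUnion_not_adj_inl_inr {V W : Type*} (G : SimpleGraph V) (H : SimpleGraph W)
    (a : V) (b : W) : ¬ (G.disjUnion H).Adj (Sum.inl a) (Sum.inr b) := fun h => h

lemma disjUnion_not_adj_inr_inl {V W : Type*} (G : SimpleGraph V) (H : SimpleGraph W)
    (a : W) (b : V) : ¬ (G.disjUnion H).Adj (Sum.inr a) (Sum.inl b) := fun h => h

lemma multiCopy_adj {k : ℕ} {V : Type*} (G : SimpleGraph V) (a b : Fin k × V) :
    (SimpleGraph.multiCopy k G).Adj a b ↔ a.1 = b.1 ∧ G.Adj a.2 b.2 := Iff.rfl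

lemma pathGraph2_adj_of_ne {x y : Fin 2} (h : x ≠ y) : (SimpleGraph.pathGraph 2).Adj x y := by
  rw [SimpleGraph.pathGraph_adj]
  have := Fin.val_ne_of_ne h
  omega

lemma adj_of_component {t n : ℕ} (f : (Fin (t + 2) × Fin 2) ↪ Fin n) (G : SimpleGraph (Fin n))
    (hHG : ∀ e ∈ (SimpleGraph.multiCopy (t + 2) (SimpleGraph.pathGraph 2)).edgeSet,
      Sym2.map (⇑f) e ∈ G.edgeSet)
    (p : Fin (t + 2)) (x y : Fin 2) (hxy : x ≠ y) : G.Adj (f (p, x)) (f (p, y)) := by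
  have h : s((p, x), (p, y)) ∈
      (SimpleGraph.multiCopy (t + 2) (SimpleGraph.pathGraph 2)).edgeSet := by
    rw [SimpleGraph.mem_edgeSet]
    exact ⟨rfl, pathGraph2_adj_of_ne hxy⟩
  have := hHG _ h
  rw [Sym2.map_pair_eq, SimpleGraph.mem_edgeSet] at this
  exact this

def crossVert {t : ℕ} (i j : Fin (t + 2)) (a b : Fin 2) (π : Fin t → Fin (t + 2)) :
    (Fin 1 × Fin 4) ⊕ (Fin t × Fin 2) → Fin (t + 2) × Fin 2
  | Sum.inl (_, r) =>
      if r = 0 then (i, a + 1) else if r = 1 then (i, a) else if r = 2 then (j, b) else (j, b + 1)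
  | Sum.inr (k, s) => (π k, s)

lemma crossVert_injective {t : ℕ} (i j : Fin (t + 2)) (hij : i ≠ j) (a b : Fin 2)
    (π : Fin t → Fin (t + 2)) (hπ : Function.Injective π)
    (hπi : ∀ k, π k ≠ i) (hπj : ∀ k, π k ≠ j) :
    Function.Injective (crossVert i j a b π) := by
  have ha : ∀ x : Fin 2, x + 1 ≠ x := by decide
  have ha' : ∀ x : Fin 2, x ≠ x + 1 := by decide
  have hij' : j ≠ i := hij.symm
  rintro (⟨q, r⟩ | ⟨k, s⟩) (⟨q', r'⟩ | ⟨k', s'⟩) h <;> simp only [crossVert] at h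
  · fin_cases q; fin_cases q'; fin_cases r <;> fin_cases r' <;>
      first
        | rfl
        | simp_all [Prod.ext_iff, ha a, ha b, ha' a, ha' b, hij, hij']
  · exfalso
    fin_cases r <;> simp only [Prod.ext_iff] at h <;>
      first
        | exact hπi _ h.1.symm
        | exact hπj _ h.1.symm
  · exfalso
    fin_cases r' <;> simp only [Prod.ext_iff] at h <;>
      first
        | exact hπi _ h.1
        | exact hπj _ h.1
  · rw [Prod.ext_iff] at h
    obtain ⟨h1, h2⟩ := h
    cases hπ h1
    cases h2
    rfl

lemma cross_rainbow {t n : ℕ} (c : Sym2 (Fin n) → ℕ)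
    (f : (Fin (t + 2) × Fin 2) ↪ Fin n)
    (G : SimpleGraph (Fin n)) (hG : Set.InjOn c G.edgeSet)
    (hHG : ∀ e ∈ (SimpleGraph.multiCopy (t + 2) (SimpleGraph.pathGraph 2)).edgeSet,
      Sym2.map (⇑f) e ∈ G.edgeSet)
    (i j : Fin (t + 2)) (hij : i ≠ j) (a b : Fin 2)
    (hadj : G.Adj (f (i, a)) (f (j, b))) :
    HasRainbowCopy n c (kP4tP2 1 t) := by
  obtain ⟨j', hj'⟩ := Fin.exists_succAbove_eq hij.symm
  set π : Fin t → Fin (t + 2) := fun k => i.succAbove (j'.succAbove k) with hπdef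
  have hπ : Function.Injective π := fun k k' h =>
    Fin.succAbove_right_injective (Fin.succAbove_right_injective h)
  have hπi : ∀ k, π k ≠ i := fun k => Fin.succAbove_ne i _
  have hπj : ∀ k, π k ≠ j := by
    intro k h
    rw [← hj'] at h
    exact Fin.succAbove_ne j' k (Fin.succAbove_right_injective h)
  have hginj : Function.Injective (fun z => f (crossVert i j a b π z)) :=
    f.injective.comp (crossVert_injective i j hij a b π hπ hπi hπj)
  have hcomp := adj_of_component f G hHG
  have ha : ∀ x : Fin 2, x + 1 ≠ x := by decide
  have ha' : ∀ x : Fin 2, x ≠ x + 1 := by decide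
  have hadjmap : ∀ u v, (kP4tP2 1 t).Adj u v →
      G.Adj (f (crossVert i j a b π u)) (f (crossVert i j a b π v)) := by
    rintro (⟨q, r⟩ | ⟨k, s⟩) (⟨q', r'⟩ | ⟨k', s'⟩) he
    · rw [kP4tP2, disjUnion_adj_inl_inl, multiCopy_adj] at he
      have hr := he.2
      rw [SimpleGraph.pathGraph_adj] at hr
      fin_cases r <;> fin_cases r' <;> simp only [crossVert] <;>
        first
          | exact hcomp _ _ _ (ha _)
          | exact hcomp _ _ _ (ha' _)
          | exact hadj
          | exact hadj.symm
          | simp at hr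
    · exact absurd he (disjUnion_not_adj_inl_inr _ _ _ _)
    · exact absurd he (disjUnion_not_adj_inr_inl _ _ _ _)
    · rw [kP4tP2, disjUnion_adj_inr_inr, multiCopy_adj] at he
      obtain ⟨hk, hs⟩ := he
      simp only at hk
      subst hk
      exact hcomp (π k) s s' hs.ne
  have hmem : ∀ e ∈ (kP4tP2 1 t).edgeSet,
      Sym2.map (fun z => f (crossVert i j a b π z)) e ∈ G.edgeSet := by
    intro e
    induction e using Sym2.ind with
    | _ u v =>
      intro he
      rw [SimpleGraph.mem_edgeSet] at he
      rw [Sym2.map_pair_eq, SimpleGraph.mem_edgeSet]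
      exact hadjmap u v he
  refine ⟨⟨_, hginj⟩, ?_⟩
  intro e₁ he₁ e₂ he₂ hce
  simp only [Function.Embedding.coeFn_mk] at hce
  exact Sym2.map.injective hginj (hG (hmem e₁ he₁) (hmem e₂ he₂) hce)

/-- Let `t ≥ 2`, `n ≥ 2t + 4`, let `c` be an edge-coloring of `K_n` with
no rainbow copy of `P₄ ∪ tP₂`, let `f` be a rainbow copy of `(t + 2)P₂` in `K_n`, and let
`G` be a rainbow subgraph of `K_n` containing the edges of that copy. Then no edge of `G`
joins vertices of two distinct `P₂`-components, and `G` has exactly `t + 2` edges inside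
the vertex set of the copy. -/
theorem stmt_12 (t n : ℕ) (ht : 2 ≤ t) (hn : 2 * t + 4 ≤ n)
    (c : Sym2 (Fin n) → ℕ)
    (hno : ¬ HasRainbowCopy n c (kP4tP2 1 t))
    (f : (Fin (t + 2) × Fin 2) ↪ Fin n)
    (hH : Set.InjOn (fun e => c (Sym2.map (⇑f) e))
      (SimpleGraph.multiCopy (t + 2) (SimpleGraph.pathGraph 2)).edgeSet)
    (G : SimpleGraph (Fin n))
    (hG : Set.InjOn c G.edgeSet)
    (hHG : ∀ e ∈ (SimpleGraph.multiCopy (t + 2) (SimpleGraph.pathGraph 2)).edgeSet,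
      Sym2.map (⇑f) e ∈ G.edgeSet) :
    (∀ i j : Fin (t + 2), i ≠ j → ∀ a b : Fin 2, ¬ G.Adj (f (i, a)) (f (j, b))) ∧
    (edgesInside G (Set.range ⇑f)).ncard = t + 2 := by
  have hcross : ∀ i j : Fin (t + 2), i ≠ j → ∀ a b : Fin 2, ¬ G.Adj (f (i, a)) (f (j, b)) := by
    intro i j hij a b hadj
    exact hno (cross_rainbow c f G hG hHG i j hij a b hadj)
  refine ⟨hcross, ?_⟩
  have hcomp := adj_of_component f G hHG
  have hset : edgesInside G (Set.range ⇑f) =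
      Set.range (fun p : Fin (t + 2) => s(f (p, 0), f (p, 1))) := by
    ext e
    constructor
    · induction e using Sym2.ind with
      | _ u v =>
        rintro ⟨he, hin⟩
        rw [SimpleGraph.mem_edgeSet] at he
        obtain ⟨⟨i, x⟩, hp⟩ := hin u (Sym2.mem_mk_left u v)
        obtain ⟨⟨j, y⟩, hq⟩ := hin v (Sym2.mem_mk_right u v)
        subst hp
        subst hq
        by_cases hij : i = j
        · subst hij
          have hxy : x ≠ y := by
            intro h
            subst h
            exact he.ne rfl
          refine ⟨i, ?_⟩
          fin_cases x <;> fin_cases y <;>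
            first
              | exact absurd rfl hxy
              | rfl
              | exact Sym2.eq_swap
        · exact absurd he (hcross i j hij x y)
    · rintro ⟨p, rfl⟩
      refine ⟨(SimpleGraph.mem_edgeSet G).2 (hcomp p 0 1 (by decide)), ?_⟩
      intro v hv
      rw [Sym2.mem_iff] at hv
      rcases hv with rfl | rfl
      · exact ⟨_, rfl⟩
      · exact ⟨_, rfl⟩
  have hinj2 : Function.Injective (fun p : Fin (t + 2) => s(f (p, 0), f (p, 1))) := by
    intro p q h
    rw [Sym2.eq_iff] at h
    obtain ⟨h1, h2⟩ | ⟨h1, h2⟩ := h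
    · exact (Prod.mk.injEq _ _ _ _ ▸ f.injective h1).1
    · have h3 := congrArg Prod.snd (f.injective h1)
      simp at h3
  rw [hset, ← Set.image_univ, Set.ncard_image_of_injective _ hinj2, Set.ncard_univ,
    Nat.card_eq_fintype_card, Fintype.card_fin]
end

section
/- Let k ≥ 2, t ≥ k + 1, and n ≥ 8k + 2t − 4 be integers, let c be an edge-coloring of K_n that contains no rainbow copy of kP₄ ∪ tP₂, let H be a rainbow subgraph of K_n isomorphic to (k − 1)P₄ ∪ (t + 2)P₂ with H₂ denoting the union of its t + 2 path components on 2 vertices, let G be a rainbow spanning subgraph of K_n whose edge set contains E(H), and set V' = V(K_n) ∖ V(H). Then |E(G[V'])| + |[V(H₂), V']_G| ≤ 2n − 4t − 8k. -/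
lemma kP4tP2_adj_ll {k t : ℕ} {p q : Fin k × Fin 4} :
    (kP4tP2 k t).Adj (Sum.inl p) (Sum.inl q) ↔ p.1 = q.1 ∧ (SimpleGraph.pathGraph 4).Adj p.2 q.2 :=
  Iff.rfl

lemma kP4tP2_adj_rr {k t : ℕ} {p q : Fin t × Fin 2} :
    (kP4tP2 k t).Adj (Sum.inr p) (Sum.inr q) ↔ p.1 = q.1 ∧ (SimpleGraph.pathGraph 2).Adj p.2 q.2 :=
  Iff.rfl

lemma kP4tP2_adj_lr {k t : ℕ} {p : Fin k × Fin 4} {q : Fin t × Fin 2} :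
    ¬ (kP4tP2 k t).Adj (Sum.inl p) (Sum.inr q) := fun h => h

lemma kP4tP2_adj_rl {k t : ℕ} {p : Fin k × Fin 4} {q : Fin t × Fin 2} :
    ¬ (kP4tP2 k t).Adj (Sum.inr q) (Sum.inl p) := fun h => h

lemma p2_adj (j j' : Fin 2) (h : j ≠ j') : (SimpleGraph.pathGraph 2).Adj j j' := by
  rw [SimpleGraph.pathGraph_adj]
  have h2 := j.isLt; have h3 := j'.isLt
  simp [Fin.ext_iff] at h
  omega


lemma lemA {k t n : ℕ} (hk : 2 ≤ k)
    {c : Sym2 (Fin n) → ℕ}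
    (hno : ¬ HasRainbowCopy n c (kP4tP2 k t))
    (f : ((Fin (k - 1) × Fin 4) ⊕ (Fin (t + 2) × Fin 2)) ↪ Fin n)
    {G : SimpleGraph (Fin n)}
    (hG : Set.InjOn c G.edgeSet)
    (hHG : ∀ e ∈ (kP4tP2 (k - 1) (t + 2)).edgeSet, Sym2.map (⇑f) e ∈ G.edgeSet)
    (x : Fin 4 → Fin n) (hxinj : Function.Injective x)
    (h01 : G.Adj (x 0) (x 1)) (h12 : G.Adj (x 1) (x 2)) (h23 : G.Adj (x 2) (x 3))
    (hxl : ∀ (j : Fin 4) (p : Fin (k-1) × Fin 4), f (Sum.inl p) ≠ x j)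
    (g : Fin t ↪ Fin (t + 2))
    (hg : ∀ (a : Fin t) (j : Fin 2) (j' : Fin 4), f (Sum.inr (g a, j)) ≠ x j') :
    False := by
  apply hno
  set F : (Fin k × Fin 4) ⊕ (Fin t × Fin 2) → Fin n :=
    Sum.elim
      (fun q : Fin k × Fin 4 =>
        if h : (q.1 : ℕ) < k - 1 then f (Sum.inl (⟨q.1, h⟩, q.2)) else x q.2)
      (fun q : Fin t × Fin 2 => f (Sum.inr (g q.1, q.2))) with hF
  have hpath : ∀ j j' : Fin 4, (SimpleGraph.pathGraph 4).Adj j j' → G.Adj (x j) (x j') := by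
    intro j j' h
    rw [SimpleGraph.pathGraph_adj] at h
    fin_cases j <;> fin_cases j' <;> simp_all <;>
      first
        | exact h01 | exact h01.symm | exact h12 | exact h12.symm
        | exact h23 | exact h23.symm | omega
  have hFinj : Function.Injective F := by
    rintro (⟨i, j⟩ | ⟨a, j⟩) (⟨i', j'⟩ | ⟨a', j'⟩) h <;> simp only [hF, Sum.elim_inl, Sum.elim_inr] at h
    · by_cases h1 : (i : ℕ) < k - 1 <;> by_cases h2 : (i' : ℕ) < k - 1 <;>
        simp only [h1, h2, dif_pos, dif_neg, dite_true, dite_false] at h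
      · rcases Sum.inl.inj (f.injective h) with h3
        have : i = i' := by
          have := congrArg Prod.fst h3
          simpa [Fin.ext_iff] using congrArg Fin.val this
        have : j = j' := congrArg Prod.snd h3
        simp_all
      · exact absurd h (hxl _ _)
      · exact absurd h.symm (hxl _ _)
      · have hj : j = j' := hxinj h
        have : i = i' := by
          have := i.isLt; have := i'.isLt
          apply Fin.ext; omega
        simp_all
    · by_cases h1 : (i : ℕ) < k - 1 <;> simp only [h1, dif_pos, dif_neg, dite_true, dite_false] at h
      · exact absurd (f.injective h) (by simp)
      · exact absurd h.symm (hg _ _ _)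
    · by_cases h1 : (i' : ℕ) < k - 1 <;> simp only [h1, dif_pos, dif_neg, dite_true, dite_false] at h
      · exact absurd (f.injective h) (by simp)
      · exact absurd h (hg _ _ _)
    · rcases Sum.inr.inj (f.injective h) with h3
      have h4 : g a = g a' := congrArg Prod.fst h3
      have : a = a' := g.injective h4
      have : j = j' := congrArg Prod.snd h3
      simp_all
  have hedge : ∀ e ∈ (kP4tP2 k t).edgeSet, Sym2.map F e ∈ G.edgeSet := by
    intro e he
    induction e using Sym2.ind with
    | _ a b =>
      rw [SimpleGraph.mem_edgeSet] at he
      rcases a with ⟨i, j⟩ | ⟨a, j⟩ <;> rcases b with ⟨i', j'⟩ | ⟨a', j'⟩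
      · rw [kP4tP2_adj_ll] at he
        obtain ⟨hii, hjj⟩ := he
        simp only at hii; subst hii
        by_cases h1 : (i : ℕ) < k - 1
        · have := hHG s(Sum.inl (⟨i, h1⟩, j), Sum.inl (⟨i, h1⟩, j'))
            (by rw [SimpleGraph.mem_edgeSet, kP4tP2_adj_ll]; exact ⟨rfl, hjj⟩)
          simpa [hF, Sym2.map_pair_eq, h1] using this
        · simp only [Sym2.map_pair_eq, hF, Sum.elim_inl, dif_neg h1]
          rw [SimpleGraph.mem_edgeSet]
          exact hpath _ _ hjj
      · exact absurd he kP4tP2_adj_lr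
      · exact absurd he kP4tP2_adj_rl
      · rw [kP4tP2_adj_rr] at he
        obtain ⟨hii, hjj⟩ := he
        simp only at hii; subst hii
        have := hHG s(Sum.inr (g a, j), Sum.inr (g a, j'))
          (by rw [SimpleGraph.mem_edgeSet, kP4tP2_adj_rr]; exact ⟨rfl, hjj⟩)
        simpa [hF, Sym2.map_pair_eq] using this
  refine ⟨⟨F, hFinj⟩, ?_⟩
  intro e1 he1 e2 he2 hc12
  simp only at hc12
  have m1 := hedge e1 he1
  have m2 := hedge e2 he2
  exact Sym2.map.injective hFinj (hG m1 m2 hc12)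

lemma inj4 {α : Type*} {a b c d : α} (h1 : a ≠ b) (h2 : a ≠ c) (h3 : a ≠ d)
    (h4 : b ≠ c) (h5 : b ≠ d) (h6 : c ≠ d) : Function.Injective ![a, b, c, d] := by
  intro i j h
  fin_cases i <;> fin_cases j <;> simp_all

lemma count_le_two_mul {α β : Type*} (S : Set α) (T : Set β) (hS : S.Finite) (hT : T.Finite)
    (F : α → β) (hF : ∀ e ∈ S, F e ∈ T)
    (hfib : ∀ v ∈ T, {e | e ∈ S ∧ F e = v}.ncard ≤ 2) :
    S.ncard ≤ 2 * T.ncard := by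
  classical
  rw [Set.ncard_eq_toFinset_card S hS, Set.ncard_eq_toFinset_card T hT]
  refine Finset.card_le_mul_card_image_of_maps_to (f := F) ?_ 2 ?_
  · intro a ha
    rw [Set.Finite.mem_toFinset] at ha ⊢
    exact hF a ha
  · intro b hb
    rw [Set.Finite.mem_toFinset] at hb
    have hcoe : ((hS.toFinset.filter (fun a => F a = b)) : Set α) = {e | e ∈ S ∧ F e = b} := by
      ext a
      simp [Set.Finite.mem_toFinset]
    have := hfib b hb
    rw [← hcoe, Set.ncard_coe_finset] at this
    exact this

lemma pair_ncard_le_two {α : Type*} (a b : α) : ({a, b} : Set α).ncard ≤ 2 := by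
  have h1 := Set.ncard_insert_le a ({b} : Set α)
  simpa [Set.ncard_singleton] using h1

/-- Let `k ≥ 2`, `t ≥ k + 1`, `n ≥ 8k + 2t - 4`, let `c` be an
edge-coloring of `K_n` with no rainbow copy of `kP₄ ∪ tP₂`, let `f` be a rainbow copy of
`(k - 1)P₄ ∪ (t + 2)P₂` in `K_n` (with `H₂` its `P₂`-part), let `G` be a rainbow spanning
subgraph of `K_n` containing the edges of that copy, and let `V'` be the complement of
the vertex set of the copy. Then `|E(G[V'])| + |[V(H₂), V']_G| ≤ 2n - 4t - 8k`. -/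
theorem stmt_14 (k t n : ℕ) (hk : 2 ≤ k) (ht : k + 1 ≤ t) (hn : 8 * k + 2 * t - 4 ≤ n)
    (c : Sym2 (Fin n) → ℕ)
    (hno : ¬ HasRainbowCopy n c (kP4tP2 k t))
    (f : ((Fin (k - 1) × Fin 4) ⊕ (Fin (t + 2) × Fin 2)) ↪ Fin n)
    (hH : Set.InjOn (fun e => c (Sym2.map (⇑f) e)) (kP4tP2 (k - 1) (t + 2)).edgeSet)
    (G : SimpleGraph (Fin n))
    (hG : Set.InjOn c G.edgeSet)
    (hHG : ∀ e ∈ (kP4tP2 (k - 1) (t + 2)).edgeSet, Sym2.map (⇑f) e ∈ G.edgeSet) :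
    (edgesInside G (Set.range ⇑f)ᶜ).ncard +
      (edgesBetween G (Set.range fun p : Fin (t + 2) × Fin 2 => f (Sum.inr p))
        (Set.range ⇑f)ᶜ).ncard ≤ 2 * n - 4 * t - 8 * k := by
  classical
  set V' : Set (Fin n) := (Set.range ⇑f)ᶜ with hV'def
  set H2 : Set (Fin n) := Set.range (fun p : Fin (t + 2) × Fin 2 => f (Sum.inr p)) with hH2def
  set M : Fin n → Set (Fin n) := fun v => {u | u ∈ H2 ∧ G.Adj u v} with hMdef
  set NB : Fin n → Set (Fin n) := fun v => {y | y ∈ V' ∧ G.Adj v y} with hNBdef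
  set A : Set (Fin n) := {v | v ∈ V' ∧ (M v).Nonempty} with hAdef
  set B : Set (Fin n) := {v | v ∈ V' ∧ M v = ∅} with hBdef
  have hfne : ∀ (p) {v : Fin n}, v ∈ V' → f p ≠ v := by
    intro p v hv h
    exact hv ⟨p, h⟩
  have hfr : ∀ {p q : Fin (t+2) × Fin 2}, f (Sum.inr p) = f (Sum.inr q) → p = q :=
    fun h => Sum.inr.inj (f.injective h)
  have hfr1 : ∀ {i i' : Fin (t+2)} {j j' : Fin 2},
      f (Sum.inr (i, j)) = f (Sum.inr (i', j')) → i = i' :=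
    fun h => (Prod.ext_iff.1 (hfr h)).1
  have hfr2 : ∀ {i i' : Fin (t+2)} {j j' : Fin 2},
      f (Sum.inr (i, j)) = f (Sum.inr (i', j')) → j = j' :=
    fun h => (Prod.ext_iff.1 (hfr h)).2
  have hlr : ∀ (p : Fin (k-1) × Fin 4) (q : Fin (t+2) × Fin 2),
      f (Sum.inl p) ≠ f (Sum.inr q) :=
    fun p q h => Sum.inl_ne_inr (f.injective h)
  have hpairadj : ∀ (i : Fin (t+2)) (j j' : Fin 2), j ≠ j' →
      G.Adj (f (Sum.inr (i, j))) (f (Sum.inr (i, j'))) := by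
    intro i j j' hjj
    have := hHG s(Sum.inr (i, j), Sum.inr (i, j'))
      (by rw [SimpleGraph.mem_edgeSet]; exact ⟨rfl, p2_adj _ _ hjj⟩)
    rw [Sym2.map_pair_eq, SimpleGraph.mem_edgeSet] at this
    exact this
  -- claim B: a vertex of V' with an H2-neighbour has no V'-neighbour
  have claimB : ∀ v u w : Fin n, v ∈ V' → w ∈ V' → u ∈ H2 → G.Adj u v → G.Adj v w → False := by
    rintro v u w hv hw ⟨⟨i, j⟩, rfl⟩ hu hvw
    set j' : Fin 2 := if j = 0 then 1 else 0 with hj'def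
    have hjj' : j ≠ j' := by fin_cases j <;> simp [hj'def]
    refine lemA hk hno f hG hHG
      ![f (Sum.inr (i, j')), f (Sum.inr (i, j)), v, w] ?_ ?_ ?_ ?_ ?_
      ((Fin.castSuccOrderEmb.toEmbedding).trans i.succAboveEmb) ?_
    · exact inj4 (fun h => hjj' (hfr2 h).symm)
        (hfne _ hv) (hfne _ hw) (hfne _ hv) (hfne _ hw) hvw.ne
    · simpa using hpairadj i j' j hjj'.symm
    · simpa using hu
    · simpa using hvw
    · intro j₃ p
      fin_cases j₃ <;> simp only [Matrix.cons_val_zero, Matrix.cons_val_one, Matrix.head_cons]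
      · exact hlr _ _
      · exact hlr _ _
      · exact hfne _ hv
      · exact hfne _ hw
    · intro a j₂ j₃
      have hga : i.succAbove (Fin.castSucc a) ≠ i := Fin.succAbove_ne i _
      fin_cases j₃ <;> simp only [Matrix.cons_val_zero, Matrix.cons_val_one, Matrix.head_cons,
        Function.Embedding.trans_apply, Fin.coe_succAboveEmb]
      · exact fun h => hga (hfr1 h)
      · exact fun h => hga (hfr1 h)
      · exact hfne _ hv
      · exact hfne _ hw
  -- claim C: all H2-neighbours of a V'-vertex lie in the same pair
  have claimC : ∀ v : Fin n, v ∈ V' → ∀ (i₁ : Fin (t+2)) (j₁ : Fin 2) (i₂ : Fin (t+2)) (j₂ : Fin 2),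
      G.Adj (f (Sum.inr (i₁, j₁))) v → G.Adj (f (Sum.inr (i₂, j₂))) v → i₁ = i₂ := by
    intro v hv i₁ j₁ i₂ j₂ h1 h2
    by_contra hne
    obtain ⟨j₀, hj₀⟩ := Fin.exists_succAbove_eq (Ne.symm hne)
    set j₁' : Fin 2 := if j₁ = 0 then 1 else 0 with hj₁'def
    have hjj' : j₁ ≠ j₁' := by fin_cases j₁ <;> simp [hj₁'def]
    have hii : f (Sum.inr (i₁, j₁)) ≠ f (Sum.inr (i₂, j₂)) :=
      fun h => hne (hfr1 h)
    have hii' : f (Sum.inr (i₁, j₁')) ≠ f (Sum.inr (i₂, j₂)) :=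
      fun h => hne (hfr1 h)
    have hgne : ∀ a : Fin t, i₁.succAbove (j₀.succAbove a) ≠ i₂ := by
      intro a h
      exact Fin.succAbove_ne j₀ a
        ((Fin.succAbove_right_injective (p := i₁)) (h.trans hj₀.symm))
    refine lemA hk hno f hG hHG
      ![f (Sum.inr (i₁, j₁')), f (Sum.inr (i₁, j₁)), v, f (Sum.inr (i₂, j₂))] ?_ ?_ ?_ ?_ ?_
      ((j₀.succAboveEmb).trans i₁.succAboveEmb) ?_
    · exact inj4 (fun h => hjj' (hfr2 h).symm)
        (hfne _ hv) hii' (hfne _ hv) hii (hfne (Sum.inr (i₂, j₂)) hv).symm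
    · simpa using hpairadj i₁ j₁' j₁ hjj'.symm
    · simpa using h1
    · simpa using h2.symm
    · intro j₃ p
      fin_cases j₃ <;> simp only [Matrix.cons_val_zero, Matrix.cons_val_one, Matrix.head_cons]
      · exact hlr _ _
      · exact hlr _ _
      · exact hfne _ hv
      · exact hlr _ _
    · intro a j₂' j₃
      have hga : i₁.succAbove (j₀.succAbove a) ≠ i₁ := Fin.succAbove_ne i₁ _
      fin_cases j₃ <;> simp only [Matrix.cons_val_zero, Matrix.cons_val_one, Matrix.head_cons,
        Function.Embedding.trans_apply, Fin.coe_succAboveEmb]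
      · exact fun h => hga (hfr1 h)
      · exact fun h => hga (hfr1 h)
      · exact hfne _ hv
      · exact fun h => hgne a (hfr1 h)
  -- no P4 within V'
  have claimP4 : ∀ a b c' d : Fin n, a ∈ V' → b ∈ V' → c' ∈ V' → d ∈ V' →
      G.Adj a b → G.Adj b c' → G.Adj c' d → a ≠ c' → a ≠ d → b ≠ d → False := by
    intro a b c' d ha hb hc hd hab hbc hcd hac had hbd
    refine lemA hk hno f hG hHG ![a, b, c', d] ?_ ?_ ?_ ?_ ?_
      ((Fin.castLEOrderEmb (by omega : t ≤ t + 2)).toEmbedding) ?_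
    · exact inj4 hab.ne hac had hbc.ne hbd hcd.ne
    · simpa using hab
    · simpa using hbc
    · simpa using hcd
    · intro j₃ p
      fin_cases j₃ <;>
        simp only [Matrix.cons_val_zero, Matrix.cons_val_one, Matrix.head_cons] <;>
        first
          | exact hfne _ ha | exact hfne _ hb | exact hfne _ hc | exact hfne _ hd
    · intro a' j₂ j₃
      fin_cases j₃ <;>
        simp only [Matrix.cons_val_zero, Matrix.cons_val_one, Matrix.head_cons] <;>
        first
          | exact hfne _ ha | exact hfne _ hb | exact hfne _ hc | exact hfne _ hd
  -- key facts about the two edge sets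
  have key1 : ∀ e ∈ edgesInside G V', ∃ v, v ∈ B ∧ (NB v).ncard ≤ 2 ∧
      ∃ y ∈ NB v, e = s(v, y) := by
    intro e he
    induction e using Sym2.ind with
    | _ u w =>
      obtain ⟨hee, hmem⟩ := he
      have hadj : G.Adj u w := (SimpleGraph.mem_edgeSet G).1 hee
      have hu : u ∈ V' := hmem u (Sym2.mem_mk_left u w)
      have hw : w ∈ V' := hmem w (Sym2.mem_mk_right u w)
      have hBmem : ∀ z₁ z₂ : Fin n, z₁ ∈ V' → z₂ ∈ V' → G.Adj z₁ z₂ → z₁ ∈ B := by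
        intro z₁ z₂ hz₁ hz₂ hz
        refine ⟨hz₁, ?_⟩
        by_contra hne
        obtain ⟨z, hzH2, hzadj⟩ := Set.nonempty_iff_ne_empty.2 hne
        exact claimB z₁ z z₂ hz₁ hz₂ hzH2 hzadj hz
      have huB : u ∈ B := hBmem u w hu hw hadj
      have hwB : w ∈ B := hBmem w u hw hu hadj.symm
      by_cases h1 : (NB u).ncard ≤ 2
      · exact ⟨u, huB, h1, w, ⟨hw, hadj⟩, rfl⟩
      by_cases h2 : (NB w).ncard ≤ 2
      · exact ⟨w, hwB, h2, u, ⟨hu, hadj.symm⟩, Sym2.eq_swap⟩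
      exfalso
      push_neg at h1 h2
      obtain ⟨w₁, hw₁, hw₁w⟩ := Set.exists_ne_of_one_lt_ncard (s := NB u) (by omega) w
      have hdiff : (NB w \ {u, w₁}).ncard ≠ 0 := by
        have h3 := Set.ncard_le_ncard_diff_add_ncard (NB w) ({u, w₁} : Set (Fin n))
          (Set.toFinite _)
        have h4 : ({u, w₁} : Set (Fin n)).ncard ≤ 2 := pair_ncard_le_two u w₁
        omega
      obtain ⟨z, hzNB, hznot⟩ := Set.nonempty_of_ncard_ne_zero hdiff
      simp only [Set.mem_insert_iff, Set.mem_singleton_iff, not_or] at hznot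
      exact claimP4 w₁ u w z hw₁.1 hu hw hzNB.1 hw₁.2.symm hadj hzNB.2
        hw₁w (fun h => hznot.2 h.symm) (fun h => hznot.1 h.symm)
  have key2 : ∀ e ∈ edgesBetween G H2 V', ∃ v, v ∈ A ∧ (M v).ncard ≤ 2 ∧
      ∃ y ∈ M v, e = s(v, y) := by
    rintro e ⟨hee, u, w, rfl, hu, hw⟩
    have hadj : G.Adj u w := (SimpleGraph.mem_edgeSet G).1 hee
    have huM : u ∈ M w := ⟨hu, hadj⟩
    refine ⟨w, ⟨hw, ⟨u, huM⟩⟩, ?_, u, huM, Sym2.eq_swap⟩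
    obtain ⟨⟨i₀, j₀⟩, hp⟩ := hu
    have hsub : M w ⊆ {f (Sum.inr (i₀, 0)), f (Sum.inr (i₀, 1))} := by
      rintro z ⟨⟨⟨i, j⟩, rfl⟩, hz⟩
      have hpu : f (Sum.inr (i₀, j₀)) = u := hp
      have hi : i = i₀ := claimC w hw i j i₀ j₀ hz (by rw [hpu]; exact hadj)
      subst hi
      fin_cases j <;> simp
    exact le_trans (Set.ncard_le_ncard hsub (Set.toFinite _)) (pair_ncard_le_two _ _)
  -- counting
  have hn0 : 0 < n := by omega
  let φ1 : Sym2 (Fin n) → Fin n := fun e =>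
    if h : e ∈ edgesInside G V' then (key1 e h).choose else ⟨0, hn0⟩
  let φ2 : Sym2 (Fin n) → Fin n := fun e =>
    if h : e ∈ edgesBetween G H2 V' then (key2 e h).choose else ⟨0, hn0⟩
  have bound1 : (edgesInside G V').ncard ≤ 2 * B.ncard := by
    refine count_le_two_mul _ _ (Set.toFinite _) (Set.toFinite _) φ1 ?_ ?_
    · intro e he
      have := (key1 e he).choose_spec
      simpa [φ1, dif_pos he] using this.1
    · intro v hv
      by_cases hne : {e | e ∈ edgesInside G V' ∧ φ1 e = v}.Nonempty
      · obtain ⟨e₀, he₀S, he₀v⟩ := hne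
        have hc₀ : (key1 e₀ he₀S).choose = v := by simpa [φ1, dif_pos he₀S] using he₀v
        have hNv : (NB v).ncard ≤ 2 := hc₀ ▸ (key1 e₀ he₀S).choose_spec.2.1
        have hsub : {e | e ∈ edgesInside G V' ∧ φ1 e = v} ⊆ (fun y => s(v, y)) '' (NB v) := by
          rintro e ⟨heS, hev⟩
          have hc : (key1 e heS).choose = v := by simpa [φ1, dif_pos heS] using hev
          obtain ⟨_, _, y, hy, hey⟩ := (key1 e heS).choose_spec
          exact ⟨y, hc ▸ hy, by rw [hey, hc]⟩
        calc {e | e ∈ edgesInside G V' ∧ φ1 e = v}.ncard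
            ≤ ((fun y => s(v, y)) '' (NB v)).ncard :=
              Set.ncard_le_ncard hsub (Set.toFinite _)
          _ ≤ (NB v).ncard := Set.ncard_image_le (Set.toFinite _)
          _ ≤ 2 := hNv
      · rw [Set.not_nonempty_iff_eq_empty] at hne
        simp [hne]
  have bound2 : (edgesBetween G H2 V').ncard ≤ 2 * A.ncard := by
    refine count_le_two_mul _ _ (Set.toFinite _) (Set.toFinite _) φ2 ?_ ?_
    · intro e he
      have := (key2 e he).choose_spec
      simpa [φ2, dif_pos he] using this.1
    · intro v hv
      by_cases hne : {e | e ∈ edgesBetween G H2 V' ∧ φ2 e = v}.Nonempty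
      · obtain ⟨e₀, he₀S, he₀v⟩ := hne
        have hc₀ : (key2 e₀ he₀S).choose = v := by simpa [φ2, dif_pos he₀S] using he₀v
        have hNv : (M v).ncard ≤ 2 := hc₀ ▸ (key2 e₀ he₀S).choose_spec.2.1
        have hsub : {e | e ∈ edgesBetween G H2 V' ∧ φ2 e = v} ⊆ (fun y => s(v, y)) '' (M v) := by
          rintro e ⟨heS, hev⟩
          have hc : (key2 e heS).choose = v := by simpa [φ2, dif_pos heS] using hev
          obtain ⟨_, _, y, hy, hey⟩ := (key2 e heS).choose_spec
          exact ⟨y, hc ▸ hy, by rw [hey, hc]⟩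
        calc {e | e ∈ edgesBetween G H2 V' ∧ φ2 e = v}.ncard
            ≤ ((fun y => s(v, y)) '' (M v)).ncard :=
              Set.ncard_le_ncard hsub (Set.toFinite _)
          _ ≤ (M v).ncard := Set.ncard_image_le (Set.toFinite _)
          _ ≤ 2 := hNv
      · rw [Set.not_nonempty_iff_eq_empty] at hne
        simp [hne]
  have hAB : Disjoint A B := by
    rw [Set.disjoint_left]
    rintro v ⟨_, hvne⟩ ⟨_, hvem⟩
    rw [hvem] at hvne
    exact Set.not_nonempty_empty hvne
  have hABV : A ∪ B ⊆ V' := by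
    rintro v (⟨hv, _⟩ | ⟨hv, _⟩) <;> exact hv
  have hcardAB : A.ncard + B.ncard = (A ∪ B).ncard :=
    (Set.ncard_union_eq hAB (Set.toFinite _) (Set.toFinite _)).symm
  have hABle : (A ∪ B).ncard ≤ V'.ncard := Set.ncard_le_ncard hABV (Set.toFinite _)
  have hVcard : (Set.range ⇑f).ncard + V'.ncard = n := by
    have := Set.ncard_add_ncard_compl (Set.range ⇑f) (Set.toFinite _) (Set.toFinite _)
    simpa [Nat.card_eq_fintype_card] using this
  have hrange : (Set.range ⇑f).ncard = (k - 1) * 4 + (t + 2) * 2 := by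
    rw [← Nat.card_coe_set_eq, Nat.card_range_of_injective f.injective]
    simp [Nat.card_eq_fintype_card]
  omega
end
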